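/- Intertwining property of the adiabatic time evolution (Lemma 1): The adiabatic propagator satisfies U^A_τ(s) P(0) = P(s) U^A_τ(s) for all s ∈ [0,1]. -/

import Mathlib

lemma aux_pqp {R : Type*} [Ring R] {p q : R} (hp : p*p = p) (hl : q*p + p*q = q) :
    p*q*p = 0 := by
  have h2 : p*(q*p + p*q)*p = p*q*p := by rw [hl]
  have h3 : p*(q*p + p*q)*p = p*q*p + p*q*p := by
    simp only [mul_add, add_mul, mul_assoc]
    rw [hp, ← mul_assoc p p (q*p), hp]
  rw [h3] at h2
  exact add_eq_right.mp (by rw [add_comm] at h2; exact h2)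

lemma aux_comm {R : Type*} [Ring R] {p q ch : R} (hp : p*p = p) (hch : ch*p = p*ch)
    (hl : q*p + p*q = q) (hpqp : p*q*p = 0) :
    (ch + (q*p - p*q))*p = p*(ch + (q*p - p*q)) + q := by
  have e1 : (q*p - p*q)*p = q*p - p*q*p := by
    rw [sub_mul, mul_assoc q p p, hp, mul_assoc]
  have key : (ch + (q*p - p*q))*p - p*(ch + (q*p - p*q)) = q := by
    have e2 : p*(q*p - p*q) = p*q*p - p*q := by
      rw [mul_sub, ← mul_assoc p q p, ← mul_assoc p p q, hp]
    rw [add_mul, mul_add, e1, e2, hch, hpqp, sub_zero, zero_sub]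
    have h4 : p*ch + q*p - (p*ch + -(p*q)) = q*p + p*q := by abel
    rw [h4, hl]
  exact sub_eq_iff_eq_add'.mp key

/-- **Intertwining property of the adiabatic time evolution (Lemma 1).**

`H s` is a continuous family of self-adjoint operators on a finite-dimensional complex
inner product space, `P s` a continuously differentiable family of orthogonal
projections (derivative `P'`) commuting with `H s`.  For `τ > 0`, the adiabatic
propagator `UA` solves `i ∂ₛ UA = τ H^A_τ(s) UA`, `UA 0 = 1`, where
`H^A_τ(s) = H s + (i/τ)[Ṗ s, P s]`; equivalently
`∂ₛ UA = (-(iτ) • H s + [Ṗ s, P s]) ∘ UA`, and `UA s` is unitary.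

Then `UA s ∘ P 0 = P s ∘ UA s` for all `s ∈ [0,1]`. -/
theorem adiabatic_intertwining
    {V : Type*} [NormedAddCommGroup V] [InnerProductSpace ℂ V] [FiniteDimensional ℂ V]
    (H P P' : ℝ → V →L[ℂ] V) (τ : ℝ) (hτ : 0 < τ)
    (hHsa : ∀ s ∈ Set.Icc (0:ℝ) 1, IsSelfAdjoint (H s))
    (hHc : ContinuousOn H (Set.Icc (0:ℝ) 1))
    (hPsa : ∀ s ∈ Set.Icc (0:ℝ) 1, IsSelfAdjoint (P s))
    (hPidem : ∀ s ∈ Set.Icc (0:ℝ) 1, P s ∘L P s = P s)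
    (hPH : ∀ s ∈ Set.Icc (0:ℝ) 1, H s ∘L P s = P s ∘L H s)
    (hP' : ∀ s ∈ Set.Icc (0:ℝ) 1, HasDerivAt P (P' s) s)
    (hP'c : ContinuousOn P' (Set.Icc (0:ℝ) 1))
    (UA : ℝ → V →L[ℂ] V)
    (hUA0 : UA 0 = 1)
    (hUAunitary : ∀ s ∈ Set.Icc (0:ℝ) 1,
      ContinuousLinearMap.adjoint (UA s) ∘L UA s = 1 ∧
      UA s ∘L ContinuousLinearMap.adjoint (UA s) = 1)
    (hUAde : ∀ s ∈ Set.Icc (0:ℝ) 1,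
      HasDerivAt UA
        (((-(Complex.I * (τ : ℂ))) • H s + (P' s ∘L P s - P s ∘L P' s)) ∘L UA s) s) :
    ∀ s ∈ Set.Icc (0:ℝ) 1, UA s ∘L P 0 = P s ∘L UA s := by
  -- rephrase hypotheses using the ring structure of `V →L[ℂ] V`
  simp only [← ContinuousLinearMap.mul_def] at hPidem hPH hUAde ⊢
  -- abbreviation for the generator
  set A : ℝ → V →L[ℂ] V :=
    fun u => (-(Complex.I * (τ : ℂ))) • H u + (P' u * P u - P u * P' u) with hA
  -- continuity of P and UA on Icc
  have hPc : ContinuousOn P (Set.Icc (0:ℝ) 1) :=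
    fun s hs => ((hP' s hs).continuousAt).continuousWithinAt
  have hUAc : ContinuousOn UA (Set.Icc (0:ℝ) 1) :=
    fun s hs => ((hUAde s hs).continuousAt).continuousWithinAt
  -- key identity 1: Leibniz rule for P * P = P
  have hLeib : ∀ s ∈ Set.Icc (0:ℝ) 1, P' s * P s + P s * P' s = P' s := by
    intro s hs
    have hud : UniqueDiffWithinAt ℝ (Set.Icc (0:ℝ) 1) s :=
      (uniqueDiffOn_Icc zero_lt_one) s hs
    have h1 : HasDerivWithinAt (fun u => P u * P u)
        (P' s * P s + P s * P' s) (Set.Icc (0:ℝ) 1) s :=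
      ((hP' s hs).mul (hP' s hs)).hasDerivWithinAt
    have h1' : HasDerivWithinAt P
        (P' s * P s + P s * P' s) (Set.Icc (0:ℝ) 1) s :=
      h1.congr (fun u hu => (hPidem u hu).symm) (hPidem s hs).symm
    have h2 : HasDerivWithinAt P (P' s) (Set.Icc (0:ℝ) 1) s :=
      (hP' s hs).hasDerivWithinAt
    rw [← h1'.derivWithin hud, h2.derivWithin hud]
  -- key identity 2: P P' P = 0
  have hPP'P : ∀ s ∈ Set.Icc (0:ℝ) 1, P s * P' s * P s = 0 := fun s hs =>
    aux_pqp (hPidem s hs) (hLeib s hs)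
  -- key identity 3: the commutator identity A P = P A + P'
  have hcomm : ∀ s ∈ Set.Icc (0:ℝ) 1, A s * P s = P s * A s + P' s := by
    intro s hs
    have hch : ((-(Complex.I * (τ : ℂ))) • H s) * P s
        = P s * ((-(Complex.I * (τ : ℂ))) • H s) := by
      rw [smul_mul_assoc, mul_smul_comm, hPH s hs]
    exact aux_comm (hPidem s hs) hch (hLeib s hs) (hPP'P s hs)
  -- bound on A over Icc
  have hAc : ContinuousOn A (Set.Icc (0:ℝ) 1) := by
    apply ContinuousOn.add
    · exact hHc.const_smul (-(Complex.I * (τ : ℂ)))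
    · exact (hP'c.mul hPc).sub (hPc.mul hP'c)
  obtain ⟨C, hC⟩ := (isCompact_Icc (a := (0:ℝ)) (b := 1)).exists_bound_of_continuousOn hAc
  set C' : ℝ := max C 0 with hC'
  have hC'0 : 0 ≤ C' := le_max_right _ _
  have hCbd : ∀ u ∈ Set.Icc (0:ℝ) 1, ‖A u‖ ≤ C' := fun u hu =>
    (hC u hu).trans (le_max_left _ _)
  -- the vector field
  set π : ℝ → ℝ := fun t => min (max t 0) 1 with hπ
  have hπmem : ∀ t, π t ∈ Set.Icc (0:ℝ) 1 := by
    intro t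
    exact ⟨le_min (le_max_right t 0) zero_le_one, min_le_right _ _⟩
  have hπid : ∀ t ∈ Set.Icc (0:ℝ) 1, π t = t := by
    intro t ht
    simp [hπ, max_eq_left ht.1, min_eq_left ht.2]
  set v : ℝ → (V →L[ℂ] V) → (V →L[ℂ] V) := fun t x => A (π t) * x with hv
  have hlip : ∀ t, LipschitzWith ⟨C', hC'0⟩ (v t) := by
    intro t
    apply LipschitzWith.of_dist_le_mul
    intro x y
    simp only [dist_eq_norm, hv]
    rw [← mul_sub]
    calc ‖A (π t) * (x - y)‖ ≤ ‖A (π t)‖ * ‖x - y‖ := norm_mul_le _ _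
    _ ≤ C' * ‖x - y‖ := mul_le_mul_of_nonneg_right (hCbd _ (hπmem t)) (norm_nonneg _)
  -- the two solutions
  set f : ℝ → V →L[ℂ] V := fun s => UA s * P 0 with hf
  set g : ℝ → V →L[ℂ] V := fun s => P s * UA s with hg
  have hfc : ContinuousOn f (Set.Icc (0:ℝ) 1) := hUAc.mul continuousOn_const
  have hgc : ContinuousOn g (Set.Icc (0:ℝ) 1) := hPc.mul hUAc
  have hfd : ∀ t ∈ Set.Icc (0:ℝ) 1, HasDerivAt f (v t (f t)) t := by
    intro t ht
    have h := (hUAde t ht).mul (hasDerivAt_const t (P 0))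
    simp only [mul_zero, add_zero] at h
    have heq : v t (f t) = A t * UA t * P 0 := by
      simp only [hv, hf, hπid t ht, mul_assoc]
    rw [heq]
    exact h
  have hgd : ∀ t ∈ Set.Icc (0:ℝ) 1, HasDerivAt g (v t (g t)) t := by
    intro t ht
    have h := (hP' t ht).mul (hUAde t ht)
    have heq : P' t * UA t + P t * (A t * UA t) = v t (g t) := by
      simp only [hv, hg, hπid t ht]
      conv_rhs => rw [← mul_assoc, hcomm t ht, add_mul, mul_assoc]
      abel
    rw [← heq]
    exact h
  intro s hs
  have key : Set.EqOn f g (Set.Icc (0:ℝ) 1) := by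
    apply ODE_solution_unique_of_mem_Icc_right
      (v := v) (s := fun _ => (Set.univ : Set (V →L[ℂ] V)))
      (K := ⟨C', hC'0⟩)
      (fun t _ => (hlip t).lipschitzOnWith)
      hfc
      (fun t ht => (hfd t (Set.Ico_subset_Icc_self ht)).hasDerivWithinAt)
      (fun t _ => Set.mem_univ _)
      hgc
      (fun t ht => (hgd t (Set.Ico_subset_Icc_self ht)).hasDerivWithinAt)
      (fun t _ => Set.mem_univ _)
    simp [hf, hg, hUA0]
  exact key hs
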